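/- Let m ≥ 1, let α : Fin m → ℕ be nonincreasing (i ≤ j → α j ≤ α i) with α (m−1) = 0, let V be a finite type with weights ω : V → ℕ, let p ∈ Fin m, and let σ be a profile of rankings with σ_{v₀} p = m−1 for some voter v₀. Let τ be the profile that agrees with σ on every voter except v₀, where τ_{v₀} p = 0 and for every candidate c ≠ p, τ_{v₀} c = σ_{v₀} c + 1. Then for every candidate c ≠ p, ((score_τ p : ℤ) − score_τ c) − ((score_σ p : ℤ) − score_σ c) ≥ α 0 · ω v₀, where score_h d = ∑_v ω v · α (h_v d). -/
import Mathlib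


/-- The promotion bound: bribing a voter `v₀` who ranks `p` last to rank `p` first
(shifting every other candidate back one position) gains `p` an advantage of at least
`α 0 · ω v₀` over every other candidate in a weighted scoring election. -/
theorem scoring_promotion_bound
    (m : ℕ) (hm : 1 ≤ m) (α : Fin m → ℕ)
    (hα : ∀ i j : Fin m, i ≤ j → α j ≤ α i)
    (hlast : α ⟨m - 1, Nat.sub_lt hm Nat.one_pos⟩ = 0)
    {V : Type*} [Fintype V] (ω : V → ℕ) (p : Fin m)
    (σ τ : V → (Fin m ≃ Fin m)) (v₀ : V)
    (hp : σ v₀ p = ⟨m - 1, Nat.sub_lt hm Nat.one_pos⟩)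
    (hagree : ∀ v, v ≠ v₀ → τ v = σ v)
    (htop : τ v₀ p = ⟨0, hm⟩)
    (hshift : ∀ c : Fin m, c ≠ p → ((τ v₀ c : ℕ) = (σ v₀ c : ℕ) + 1)) :
    ∀ c : Fin m, c ≠ p →
      (α ⟨0, hm⟩ : ℤ) * (ω v₀ : ℤ) ≤
        (((∑ v, ω v * α (τ v p) : ℕ) : ℤ) - ((∑ v, ω v * α (τ v c) : ℕ) : ℤ)) -
          (((∑ v, ω v * α (σ v p) : ℕ) : ℤ) - ((∑ v, ω v * α (σ v c) : ℕ) : ℤ)) := by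
  classical
  intro c hc
  have h1 : ∀ d : Fin m, (∑ v, ω v * α (τ v d)) =
      (∑ v ∈ Finset.univ.erase v₀, ω v * α (σ v d)) + ω v₀ * α (τ v₀ d) := by
    intro d
    rw [← Finset.sum_erase_add _ _ (Finset.mem_univ v₀)]
    congr 1
    exact Finset.sum_congr rfl fun v hv => by rw [hagree v (Finset.ne_of_mem_erase hv)]
  have h2 : ∀ d : Fin m, (∑ v, ω v * α (σ v d)) =
      (∑ v ∈ Finset.univ.erase v₀, ω v * α (σ v d)) + ω v₀ * α (σ v₀ d) := by
    intro d
    rw [← Finset.sum_erase_add _ _ (Finset.mem_univ v₀)]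
  rw [h1, h1, h2, h2, hp, htop, hlast]
  have hmono : α (τ v₀ c) ≤ α (σ v₀ c) := by
    apply hα
    have := hshift c hc
    exact Fin.le_def.mpr (by omega)
  push_cast
  have : (α (τ v₀ c) : ℤ) ≤ (α (σ v₀ c) : ℤ) := by exact_mod_cast hmono
  nlinarith [Int.natCast_nonneg (ω v₀)]
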